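/- For positive integers n, s and for 0 < r < n, the coefficient of T^k in (1-T)^r · ∑_{j≥s} C(n+j-1, j) T^j equals: C(n+s-1, s) if k = s; C(n+k-1-r, k) + (-1)^{k-1} ∑_{j=0}^{s-1} (-1)^j C(r, k-j) C(n+j-1, j) if s+1 ≤ k ≤ r+s-1; and C(n+k-1-r, k) if k ≥ r+s; and 0 if k < s. -/

import Mathlib

open PowerSeries Finset


lemma coeff_one_sub_X_pow (r i : ℕ) :
    PowerSeries.coeff (R := ℤ) i ((1 - PowerSeries.X) ^ r) = (-1 : ℤ) ^ i * r.choose i := by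
  have h : ((1 - PowerSeries.X) ^ r : ℤ⟦X⟧) =
      ∑ m ∈ range (r + 1), ((-1 : ℤ) ^ m * r.choose m) • PowerSeries.X ^ m := by
    rw [sub_eq_add_neg, add_comm, add_pow]
    refine Finset.sum_congr rfl fun m hm => ?_
    rw [neg_pow]
    simp only [one_pow, mul_one, smul_eq_mul, Algebra.smul_def, map_mul, map_pow, map_neg,
      map_one, map_natCast, Int.cast_natCast, zsmul_eq_mul, Int.cast_mul, Int.cast_pow, Int.cast_neg,
      Int.cast_one]
    ring
  rw [h, map_sum]
  simp only [map_zsmul, PowerSeries.coeff_X_pow, smul_eq_mul, mul_ite, mul_one, mul_zero]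
  rw [Finset.sum_ite_eq (range (r+1)) i]
  by_cases hi : i ∈ range (r+1)
  · simp [hi]
  · simp only [hi, if_false]
    simp only [Finset.mem_range, not_lt] at hi
    simp [Nat.choose_eq_zero_of_lt hi]

lemma choose_add_symm (a k : ℕ) : (a + k).choose a = (a + k).choose k := by
  have := Nat.choose_symm (Nat.le_add_left k a)
  simpa using this

lemma prod_invOneSubPow (n r : ℕ) (hrn : r < n) :
    ((1 - PowerSeries.X) ^ r : ℤ⟦X⟧) * (PowerSeries.invOneSubPow ℤ n).val =
      (PowerSeries.invOneSubPow ℤ (n - r)).val := by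
  have e1 : (invOneSubPow ℤ (n-r)).val * (1 - PowerSeries.X) ^ (n-r) = 1 := by
    rw [← invOneSubPow_inv_eq_one_sub_pow]; exact (invOneSubPow ℤ (n-r)).val_inv
  have e2 : ((1 - PowerSeries.X) ^ n : ℤ⟦X⟧) * (invOneSubPow ℤ n).val = 1 := by
    rw [← invOneSubPow_inv_eq_one_sub_pow]; exact (invOneSubPow ℤ n).inv_val
  calc ((1 - PowerSeries.X) ^ r : ℤ⟦X⟧) * (invOneSubPow ℤ n).val
      = (invOneSubPow ℤ (n-r)).val * (1 - PowerSeries.X) ^ (n-r) *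
        ((1 - PowerSeries.X) ^ r * (invOneSubPow ℤ n).val) := by rw [e1, one_mul]
    _ = (invOneSubPow ℤ (n-r)).val * ((1 - PowerSeries.X) ^ ((n-r)+r) * (invOneSubPow ℤ n).val) := by
        rw [pow_add]; ring
    _ = (invOneSubPow ℤ (n-r)).val := by
        rw [Nat.sub_add_cancel hrn.le, e2, mul_one]

lemma coeff_prod_full (n r : ℕ) (hn : 0 < n) (hrn : r < n) (k : ℕ) :
    PowerSeries.coeff (R := ℤ) k (((1 - PowerSeries.X) ^ r : ℤ⟦X⟧) *
      PowerSeries.mk fun j => ((n + j - 1).choose j : ℤ)) = ((n - r - 1 + k).choose k : ℤ) := by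
  have hG : (PowerSeries.mk fun j => ((n + j - 1).choose j : ℤ)) = (invOneSubPow ℤ n).val := by
    rw [invOneSubPow_val_eq_mk_sub_one_add_choose_of_pos ℤ n hn]
    ext j
    rw [coeff_mk, coeff_mk]
    rw [choose_add_symm]
    have h3 : n + j - 1 = n - 1 + j := by omega
    rw [h3]
  rw [hG, prod_invOneSubPow n r hrn,
    invOneSubPow_val_eq_mk_sub_one_add_choose_of_pos ℤ (n-r) (by omega), coeff_mk]
  congr 1
  exact choose_add_symm _ _

theorem stmt_6 (n s r : ℕ) (hn : 0 < n) (hs : 0 < s) (hr0 : 0 < r) (hrn : r < n) (k : ℕ) :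
    (k = s →
      (PowerSeries.coeff (R := ℤ) k) ((1 - PowerSeries.X) ^ r *
          PowerSeries.mk fun j => if s ≤ j then ((n + j - 1).choose j : ℤ) else 0) =
        (n + s - 1).choose s) ∧
    (s + 1 ≤ k → k ≤ r + s - 1 →
      (PowerSeries.coeff (R := ℤ) k) ((1 - PowerSeries.X) ^ r *
          PowerSeries.mk fun j => if s ≤ j then ((n + j - 1).choose j : ℤ) else 0) =
        ((n + k - 1 - r).choose k : ℤ) +
          (-1 : ℤ) ^ (k - 1) *
            ∑ j ∈ Finset.range s, (-1 : ℤ) ^ j * r.choose (k - j) * (n + j - 1).choose j) ∧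
    (r + s ≤ k →
      (PowerSeries.coeff (R := ℤ) k) ((1 - PowerSeries.X) ^ r *
          PowerSeries.mk fun j => if s ≤ j then ((n + j - 1).choose j : ℤ) else 0) =
        (n + k - 1 - r).choose k) ∧
    (k < s →
      (PowerSeries.coeff (R := ℤ) k) ((1 - PowerSeries.X) ^ r *
          PowerSeries.mk fun j => if s ≤ j then ((n + j - 1).choose j : ℤ) else 0) = 0) := by
  set c : ℕ → ℤ := fun j => ((n + j - 1).choose j : ℤ) with hc
  have hF : ∀ m : ℕ, (PowerSeries.coeff (R := ℤ) m) ((1 - PowerSeries.X) ^ r *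
      PowerSeries.mk fun j => if s ≤ j then ((n + j - 1).choose j : ℤ) else 0) =
      ∑ j ∈ range (m + 1),
        (if s ≤ j then c j else 0) * ((-1 : ℤ) ^ (m - j) * (r.choose (m - j) : ℤ)) := by
    intro m
    rw [mul_comm, PowerSeries.coeff_mul, Finset.Nat.sum_antidiagonal_eq_sum_range_succ_mk]
    refine Finset.sum_congr rfl fun j hj => ?_
    rw [coeff_mk, coeff_one_sub_X_pow]
  have hfull : ∀ m : ℕ,
      (∑ j ∈ range (m + 1), c j * ((-1 : ℤ) ^ (m - j) * (r.choose (m - j) : ℤ))) =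
        ((n - r - 1 + m).choose m : ℤ) := by
    intro m
    have h := coeff_prod_full n r hn hrn m
    rw [mul_comm, PowerSeries.coeff_mul, Finset.Nat.sum_antidiagonal_eq_sum_range_succ_mk] at h
    rw [← h]
    refine Finset.sum_congr rfl fun j hj => ?_
    rw [coeff_mk, coeff_one_sub_X_pow]
  have key : ∀ m : ℕ, s ≤ m → (PowerSeries.coeff (R := ℤ) m) ((1 - PowerSeries.X) ^ r *
      PowerSeries.mk fun j => if s ≤ j then ((n + j - 1).choose j : ℤ) else 0) =
      ((n - r - 1 + m).choose m : ℤ) -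
        ∑ j ∈ range s, c j * ((-1 : ℤ) ^ (m - j) * (r.choose (m - j) : ℤ)) := by
    intro m hm
    have hs' : s ≤ m + 1 := by omega
    have split1 : ∑ j ∈ range (m + 1),
        (if s ≤ j then c j else 0) * ((-1 : ℤ) ^ (m - j) * (r.choose (m - j) : ℤ)) =
        ∑ j ∈ Finset.Ico s (m + 1), c j * ((-1 : ℤ) ^ (m - j) * (r.choose (m - j) : ℤ)) := by
      rw [Finset.range_eq_Ico, ← Finset.sum_Ico_consecutive _ (Nat.zero_le s) hs']
      have h0 : ∑ j ∈ Finset.Ico 0 s,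
          (if s ≤ j then c j else 0) * ((-1 : ℤ) ^ (m - j) * (r.choose (m - j) : ℤ)) = 0 := by
        refine Finset.sum_eq_zero fun j hj => ?_
        rw [if_neg (by simp at hj; omega : ¬ s ≤ j), zero_mul]
      rw [h0, zero_add]
      exact Finset.sum_congr rfl fun j hj => by rw [if_pos (Finset.mem_Ico.mp hj).1]
    have split2 : ∑ j ∈ range (m + 1), c j * ((-1 : ℤ) ^ (m - j) * (r.choose (m - j) : ℤ)) =
        (∑ j ∈ range s, c j * ((-1 : ℤ) ^ (m - j) * (r.choose (m - j) : ℤ))) +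
        ∑ j ∈ Finset.Ico s (m + 1), c j * ((-1 : ℤ) ^ (m - j) * (r.choose (m - j) : ℤ)) := by
      rw [Finset.range_eq_Ico, ← Finset.sum_Ico_consecutive _ (Nat.zero_le s) hs']
      rw [Finset.range_eq_Ico]
    rw [hF m, split1, ← hfull m, split2]
    ring
  refine ⟨?_, ?_, ?_, ?_⟩
  · -- k = s
    intro hk
    subst hk
    rw [hF k, Finset.sum_range_succ]
    have h0 : ∑ j ∈ range k,
        (if k ≤ j then c j else 0) * ((-1 : ℤ) ^ (k - j) * (r.choose (k - j) : ℤ)) = 0 := by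
      refine Finset.sum_eq_zero fun j hj => ?_
      rw [if_neg (by simp at hj; omega : ¬ k ≤ j), zero_mul]
    rw [h0, zero_add, if_pos le_rfl, Nat.sub_self]
    simp [hc]
  · -- middle
    intro hk1 _
    rw [key k (by omega)]
    have hC : (n - r - 1 + k : ℕ) = n + k - 1 - r := by omega
    rw [hC, sub_eq_add_neg]
    congr 1
    rw [Finset.mul_sum, ← Finset.sum_neg_distrib]
    refine Finset.sum_congr rfl fun j hj => ?_
    simp only [Finset.mem_range] at hj
    have hjk : j ≤ k := by omega
    have h1 : ((-1 : ℤ)) ^ (k - j) * (-1) ^ j = (-1) ^ k := by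
      rw [← pow_add, Nat.sub_add_cancel hjk]
    have h2 : ((-1 : ℤ)) ^ j * (-1) ^ j = 1 := by rw [← mul_pow]; norm_num
    have h3 : ((-1 : ℤ)) ^ (k - 1) * (-1) = (-1) ^ k := by
      rw [← pow_succ]; congr 1; omega
    have hkj : (-1 : ℤ) ^ (k - j) = -((-1) ^ (k - 1) * (-1) ^ j) := by
      have h4 : (-1 : ℤ) ^ (k - j) = (-1) ^ k * (-1) ^ j := by
        calc (-1 : ℤ) ^ (k - j) = (-1) ^ (k - j) * ((-1) ^ j * (-1) ^ j) := by
              rw [h2, mul_one]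
          _ = ((-1) ^ (k - j) * (-1) ^ j) * (-1) ^ j := by ring
          _ = (-1) ^ k * (-1) ^ j := by rw [h1]
      rw [h4, ← h3]; ring
    rw [hkj]
    ring
  · -- high
    intro hk
    rw [key k (by omega)]
    have h0 : ∑ j ∈ range s, c j * ((-1 : ℤ) ^ (k - j) * (r.choose (k - j) : ℤ)) = 0 := by
      refine Finset.sum_eq_zero fun j hj => ?_
      simp only [Finset.mem_range] at hj
      rw [Nat.choose_eq_zero_of_lt (by omega : r < k - j)]
      simp
    rw [h0, sub_zero]
    congr 2
    omega
  · -- low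
    intro hk
    rw [hF k]
    refine Finset.sum_eq_zero fun j hj => ?_
    simp only [Finset.mem_range] at hj
    rw [if_neg (by omega : ¬ s ≤ j), zero_mul]
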